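/- Let σ : H → H̃ be a countably complete elementary embedding between structures in a countable relational language, where H is a transitive structure (with ∈ as a distinguished relation). Then the membership relation E of H̃ is well-founded. -/
import Mathlib

open FirstOrder Cardinal

/-- `σ : M → N` is `κ`-complete: for every elementary `τ : P → N` with `|P| < κ` there is
an elementary `π : P → M` with `σ (π x) = τ x` whenever `τ x ∈ ran σ`. -/
def IsCompleteEmbedding (L : FirstOrder.Language) {M N : Type} [L.Structure M] [L.Structure N]
    (κ : Cardinal.{0}) (σ : M ↪ₑ[L] N) : Prop :=
  ∀ (P : Type) (_ : L.Structure P) (τ : P ↪ₑ[L] N), #P < κ →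
    ∃ π : P ↪ₑ[L] M, ∀ x : P, (∃ y, σ y = τ x) → σ (π x) = τ x

/-- If `H` is a (transitive, hence well-founded) structure in a countable relational
language with a distinguished membership relation `E`, and `σ : H → H̃` is a countably
complete elementary embedding, then the interpretation of `E` in `H̃` is well-founded. -/
theorem stmt4 (L : FirstOrder.Language) [∀ n, IsEmpty (L.Functions n)]
    [Countable (Σ n, L.Relations n)] (E : L.Relations 2)
    (H Ht : Type) [L.Structure H] [L.Structure Ht]
    (hwf : WellFounded fun a b : H => Language.Structure.RelMap E ![a, b])
    (σ : H ↪ₑ[L] Ht) (hσ : IsCompleteEmbedding L (Cardinal.aleph 1) σ) :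
    WellFounded fun a b : Ht => Language.Structure.RelMap E ![a, b] := by
  set r := fun a b : Ht => Language.Structure.RelMap E ![a, b] with hr
  by_contra hW
  have h1 : ∃ a : Ht, ¬Acc r a := by
    by_contra h
    push_neg at h
    exact hW ⟨fun a => h a⟩
  have h2 : ∀ a : Ht, ¬Acc r a → ∃ b, r b a ∧ ¬Acc r b := by
    intro a ha
    by_contra h
    push_neg at h
    exact ha (Acc.intro a fun b hb => h b hb)
  obtain ⟨a0, ha0⟩ := h1
  let seq : ℕ → {a : Ht // ¬Acc r a} := fun n => Nat.rec ⟨a0, ha0⟩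
    (fun _ p => ⟨(h2 p.1 p.2).choose, (h2 p.1 p.2).choose_spec.2⟩) n
  let f : ℕ → Ht := fun n => (seq n).1
  have hfstep : ∀ n, r (f (n+1)) (f n) := fun n => (h2 (seq n).1 (seq n).2).choose_spec.1
  have hLcard : L.card ≤ ℵ₀ := by
    have : Countable L.Symbols := by
      unfold Language.Symbols
      infer_instance
    exact mk_le_aleph0
  have key : ∃ (P : Type) (_ : L.Structure P) (τ : P ↪ₑ[L] Ht) (g : ℕ → P),
      #P < Cardinal.aleph 1 ∧ ∀ n, τ (g n) = f n := by
    by_cases hcard : #Ht < Cardinal.aleph 1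
    · exact ⟨Ht, inferInstance, Language.ElementaryEmbedding.refl L Ht, f, hcard, fun _ => rfl⟩
    · have h4 : ℵ₀ ≤ #Ht := by
        have := not_lt.1 hcard
        calc ℵ₀ = Cardinal.aleph 0 := (aleph_zero).symm
        _ ≤ Cardinal.aleph 1 := aleph_le_aleph.2 zero_le_one
        _ ≤ #Ht := this
      have : Nonempty Ht := ⟨f 0⟩
      obtain ⟨S, hsub, hS⟩ := Language.exists_elementarySubstructure_card_eq L
        (Set.range fun n => f n) ℵ₀ le_rfl
        (by rw [lift_le]; exact (mk_range_le).trans (by simp))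
        (by simp only [lift_uzero, lift_aleph0]; exact hLcard) (by rw [lift_le]; exact h4)
      refine ⟨S, inferInstance, S.subtype, fun n => ⟨f n, hsub ⟨n, rfl⟩⟩, ?_, fun n => rfl⟩
      rw [lift_inj] at hS
      rw [hS]
      exact aleph0_lt_aleph_one
  obtain ⟨P, _, τ, g, hP, hg⟩ := key
  obtain ⟨π, -⟩ := hσ P ‹_› τ hP
  have step : ∀ n, Language.Structure.RelMap E ![π (g (n+1)), π (g n)] := by
    intro n
    have h1 : Language.Structure.RelMap E ![τ (g (n+1)), τ (g n)] := by
      rw [hg, hg]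
      exact hfstep n
    have e : ∀ (Q : Type) (ψ : ℕ → Q), ![ψ (n+1), ψ n] = ψ ∘ (![n+1, n] : Fin 2 → ℕ) := by
      intro Q ψ; funext i; fin_cases i <;> rfl
    have h2 : Language.Structure.RelMap E (τ ∘ ![g (n+1), g n]) ↔
        Language.Structure.RelMap E ![g (n+1), g n] := τ.map_rel E _
    have h3 : Language.Structure.RelMap E (π ∘ ![g (n+1), g n]) ↔
        Language.Structure.RelMap E ![g (n+1), g n] := π.map_rel E _
    have comp : ∀ (Q R : Type) (ψ : Q → R) (a b : Q), ψ ∘ ![a, b] = ![ψ a, ψ b] := by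
      intro Q R ψ a b; funext i; fin_cases i <;> rfl
    rw [comp] at h2 h3
    exact h3.2 (h2.1 h1)
  have main : ∀ a : H, ∀ n, π (g n) ≠ a := by
    intro a
    induction a using hwf.induction with
    | _ a ih =>
      intro n hn
      exact ih (π (g (n+1))) (hn ▸ step n) (n+1) rfl
  exact main (π (g 0)) 0 rfl
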